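/- arXiv:1310.1969 — 3 statements merged into one kernel-verified Lean document; each statement's English description precedes it below -/
import Mathlib

section
/- For a nonincreasing sequence λ₁ ≥ λ₂ ≥ … ≥ λ_p ≥ 0 with λ₁ > 0, the function J_λ(b) = Σᵢ λᵢ |b|₍ᵢ₎, where |b|₍₁₎ ≥ … ≥ |b|₍p₎ are the magnitudes of the entries of b sorted in decreasing order, is a norm on ℝ^p. -/
/-- The `i`-th largest absolute value among the coordinates of `b`. -/
noncomputable def sortedAbs {p : ℕ} (b : Fin p → ℝ) (i : Fin p) : ℝ :=
  |b (Tuple.sort (fun j => |b j|) i.rev)|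

/-- The sorted ℓ₁ norm `J_λ(b) = ∑ᵢ λᵢ |b|₍ᵢ₎`. -/
noncomputable def sortedL1 {p : ℕ} (lam b : Fin p → ℝ) : ℝ :=
  ∑ i, lam i * sortedAbs b i

/-- The permutation realizing `sortedAbs`. -/
noncomputable def sortedAbsPerm {p : ℕ} (b : Fin p → ℝ) : Equiv.Perm (Fin p) :=
  (Fin.revPerm).trans (Tuple.sort (fun j => |b j|))

lemma sortedAbs_eq_perm {p : ℕ} (b : Fin p → ℝ) (i : Fin p) :
    sortedAbs b i = |b (sortedAbsPerm b i)| := rfl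

lemma sortedAbs_antitone {p : ℕ} (b : Fin p → ℝ) : Antitone (sortedAbs b) := by
  intro i j hij
  have hm := Tuple.monotone_sort (fun j => |b j|)
  exact hm (show j.rev ≤ i.rev from Fin.rev_le_rev.mpr hij)

lemma sortedAbs_nonneg {p : ℕ} (b : Fin p → ℝ) (i : Fin p) : 0 ≤ sortedAbs b i :=
  abs_nonneg _

lemma sum_perm_le_sortedL1 {p : ℕ} (lam b : Fin p → ℝ) (hmono : Antitone lam)
    (σ : Equiv.Perm (Fin p)) :
    ∑ i, lam i * |b (σ i)| ≤ sortedL1 lam b := by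
  have hmv : Monovary lam (sortedAbs b) := hmono.monovary (sortedAbs_antitone b)
  have key := hmv.sum_smul_comp_perm_le_sum_smul (σ := σ.trans (sortedAbsPerm b).symm)
  simp only [smul_eq_mul] at key
  calc ∑ i, lam i * |b (σ i)|
      = ∑ i, lam i * sortedAbs b ((σ.trans (sortedAbsPerm b).symm) i) := by
        refine Finset.sum_congr rfl fun i _ => ?_
        rw [sortedAbs_eq_perm]
        simp
    _ ≤ ∑ i, lam i * sortedAbs b i := key
    _ = sortedL1 lam b := rfl

lemma sortedAbs_smul {p : ℕ} (c : ℝ) (b : Fin p → ℝ) (i : Fin p) :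
    sortedAbs (c • b) i = |c| * sortedAbs b i := by
  have hmon : Monotone ((fun j => |(c • b) j|) ∘ Tuple.sort (fun j => |b j|)) := by
    have : ((fun j => |(c • b) j|) ∘ Tuple.sort (fun j => |b j|)) =
        fun j => |c| * ((fun j => |b j|) ∘ Tuple.sort (fun j => |b j|)) j := by
      funext j; simp [abs_mul]
    rw [this]
    exact (Tuple.monotone_sort (fun j => |b j|)).const_mul (abs_nonneg c)
  have h := Tuple.comp_sort_eq_comp_iff_monotone.mpr hmon
  have := congrFun h i.rev
  simp only [Function.comp_apply] at this
  unfold sortedAbs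
  rw [← this]
  simp [abs_mul]


/-- the sorted ℓ₁ norm is a norm on ℝ^p. -/
theorem sortedL1_is_norm {p : ℕ} (hp : 0 < p) (lam : Fin p → ℝ)
    (hmono : Antitone lam) (hnonneg : ∀ i, 0 ≤ lam i)
    (hpos : 0 < lam ⟨0, hp⟩) :
    (∀ b : Fin p → ℝ, 0 ≤ sortedL1 lam b) ∧
    (∀ b : Fin p → ℝ, sortedL1 lam b = 0 ↔ b = 0) ∧
    (∀ (c : ℝ) (b : Fin p → ℝ), sortedL1 lam (c • b) = |c| * sortedL1 lam b) ∧
    (∀ a b : Fin p → ℝ, sortedL1 lam (a + b) ≤ sortedL1 lam a + sortedL1 lam b) := by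
  have hterm : ∀ (b : Fin p → ℝ) (i : Fin p), 0 ≤ lam i * sortedAbs b i :=
    fun b i => mul_nonneg (hnonneg i) (sortedAbs_nonneg b i)
  have hnn : ∀ b : Fin p → ℝ, 0 ≤ sortedL1 lam b := fun b =>
    Finset.sum_nonneg fun i _ => hterm b i
  refine ⟨hnn, ?_, ?_, ?_⟩
  · intro b
    constructor
    · intro h
      have hzero := (Finset.sum_eq_zero_iff_of_nonneg fun i _ => hterm b i).mp h
      have h0 : sortedAbs b ⟨0, hp⟩ = 0 := by
        have := hzero ⟨0, hp⟩ (Finset.mem_univ _)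
        rcases mul_eq_zero.mp this with h | h
        · exact absurd h (ne_of_gt hpos)
        · exact h
      funext j
      have : |b j| ≤ sortedAbs b ⟨0, hp⟩ := by
        have heq : |b j| = sortedAbs b ((sortedAbsPerm b).symm j) := by
          rw [sortedAbs_eq_perm]; simp
        rw [heq]
        exact sortedAbs_antitone b (by exact Fin.mk_le_of_le_val (Nat.zero_le _))
      rw [h0] at this
      have : |b j| = 0 := le_antisymm this (abs_nonneg _)
      simpa using this
    · intro h
      subst h
      unfold sortedL1
      refine Finset.sum_eq_zero fun i _ => ?_
      unfold sortedAbs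
      simp
  · intro c b
    unfold sortedL1
    rw [Finset.mul_sum]
    refine Finset.sum_congr rfl fun i _ => ?_
    rw [sortedAbs_smul]; ring
  · intro a b
    set τ := sortedAbsPerm (a + b)
    have h1 : sortedL1 lam (a + b) =
        ∑ i, lam i * |a (τ i) + b (τ i)| := rfl
    rw [h1]
    calc ∑ i, lam i * |a (τ i) + b (τ i)|
        ≤ ∑ i, (lam i * |a (τ i)| + lam i * |b (τ i)|) := by
          refine Finset.sum_le_sum fun i _ => ?_
          rw [← mul_add]
          exact mul_le_mul_of_nonneg_left (abs_add_le _ _) (hnonneg i)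
      _ = (∑ i, lam i * |a (τ i)|) + ∑ i, lam i * |b (τ i)| := Finset.sum_add_distrib
      _ ≤ sortedL1 lam a + sortedL1 lam b :=
          add_le_add (sum_perm_le_sortedL1 lam a hmono τ) (sum_perm_le_sortedL1 lam b hmono τ)
end

section
/- The sorted ℓ₁ norm satisfies the triangle inequality: for all a, b ∈ ℝ^p and any nonincreasing nonnegative sequence λ, J_λ(a + b) ≤ J_λ(a) + J_λ(b), where J_λ(x) = Σᵢ λᵢ |x|₍ᵢ₎. -/
lemma exists_perm_sortedAbs {p : ℕ} (x : Fin p → ℝ) (σ : Equiv.Perm (Fin p)) :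
    ∃ π : Equiv.Perm (Fin p), ∀ i, |x (σ i)| = sortedAbs x (π i) := by
  set s := Tuple.sort (fun j => |x j|) with hs
  refine ⟨σ.trans (s.symm.trans (Fin.revPerm)), fun i => ?_⟩
  simp [sortedAbs, ← hs, Fin.rev_rev]

lemma sum_mul_abs_le_sortedL1 {p : ℕ} (lam : Fin p → ℝ)
    (hmono : Antitone lam) (x : Fin p → ℝ) (σ : Equiv.Perm (Fin p)) :
    ∑ i, lam i * |x (σ i)| ≤ sortedL1 lam x := by
  obtain ⟨π, hπ⟩ := exists_perm_sortedAbs x σ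
  have hM : Monovary lam (sortedAbs x) := hmono.monovary (sortedAbs_antitone x)
  calc ∑ i, lam i * |x (σ i)| = ∑ i, lam i * sortedAbs x (π i) := by
        simp_rw [hπ]
    _ ≤ ∑ i, lam i * sortedAbs x i := hM.sum_mul_comp_perm_le_sum_mul
    _ = sortedL1 lam x := rfl

/-- triangle inequality for the sorted ℓ₁ norm. -/
theorem sortedL1_triangle {p : ℕ} (lam : Fin p → ℝ)
    (hmono : Antitone lam) (hnonneg : ∀ i, 0 ≤ lam i) (a b : Fin p → ℝ) :
    sortedL1 lam (a + b) ≤ sortedL1 lam a + sortedL1 lam b := by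
  set σ : Equiv.Perm (Fin p) :=
    Fin.revPerm.trans (Tuple.sort (fun j => |(a + b) j|)) with hσ
  have h1 : sortedL1 lam (a + b) = ∑ i, lam i * |(a + b) (σ i)| := rfl
  calc sortedL1 lam (a + b)
      = ∑ i, lam i * |(a + b) (σ i)| := h1
    _ ≤ ∑ i, (lam i * |a (σ i)| + lam i * |b (σ i)|) := by
        refine Finset.sum_le_sum fun i _ => ?_
        rw [← mul_add]
        exact mul_le_mul_of_nonneg_left (abs_add_le _ _) (hnonneg i)
    _ = (∑ i, lam i * |a (σ i)|) + ∑ i, lam i * |b (σ i)| := Finset.sum_add_distrib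
    _ ≤ sortedL1 lam a + sortedL1 lam b :=
        add_le_add (sum_mul_abs_le_sortedL1 lam hmono a σ)
          (sum_mul_abs_le_sortedL1 lam hmono b σ)
end

section
/- Let ỹ ∈ ℝ^p with |ỹ₁| ≥ |ỹ₂| ≥ … ≥ |ỹ_p| and λ₁ ≥ … ≥ λ_p > 0 nonincreasing. Let β̂ minimize ½‖ỹ − b‖₂² + Σᵢ λᵢ |b|₍ᵢ₎, and let i⋆ = #{i : β̂ᵢ ≠ 0}. Define i_SU as the largest index i with |ỹ|₍ᵢ₎ > λᵢ (0 if none), and i_SD + 1 as the smallest index i with |ỹ|₍ᵢ₎ ≤ λᵢ (i_SD = p if none). Then i_SD ≤ i⋆ ≤ i_SU, and moreover β̂₁,…,β̂_{i⋆} are nonzero while β̂_{i⋆+1} = … = β̂_p = 0. -/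
namespace SlopeAux

variable {p : ℕ}

noncomputable def rho (b : Fin p → ℝ) : Equiv.Perm (Fin p) :=
  (Fin.revPerm).trans (Tuple.sort (fun j => |b j|))

lemma sortedAbs_eq_rho (b : Fin p → ℝ) (i : Fin p) :
    sortedAbs b i = |b (rho b i)| := by
  simp [sortedAbs, rho, Fin.revPerm]

lemma sortedAbs_antitone (b : Fin p → ℝ) : Antitone (sortedAbs b) := by
  intro i j hij
  exact Tuple.monotone_sort (fun j => |b j|) (Fin.rev_le_rev.mpr hij)

lemma sortedAbs_congr {b c : Fin p → ℝ} (π : Equiv.Perm (Fin p))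
    (h : ∀ k, |b k| = |c (π k)|) (i : Fin p) : sortedAbs b i = sortedAbs c i := by
  have hg : (fun k => |b k|) = (fun k => |c k|) ∘ π := funext h
  have h2 : (fun k => |b k|) ∘ Tuple.sort (fun k => |b k|)
      = (fun k => |c k|) ∘ Tuple.sort (fun k => |c k|) := by
    rw [hg]
    exact Tuple.comp_perm_comp_sort_eq_comp_sort
  exact congrFun h2 i.rev

lemma sortedL1_congr {lam : Fin p → ℝ} {b c : Fin p → ℝ} (π : Equiv.Perm (Fin p))
    (h : ∀ k, |b k| = |c (π k)|) : sortedL1 lam b = sortedL1 lam c :=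
  Finset.sum_congr rfl fun i _ => by rw [sortedAbs_congr π h]

lemma sortedAbs_of_antitone {b : Fin p → ℝ} (hb : Antitone fun k => |b k|) (i : Fin p) :
    sortedAbs b i = |b i| := by
  have hmono : Monotone ((fun k => |b k|) ∘ (Fin.revPerm : Equiv.Perm (Fin p))) := by
    intro x y hxy
    exact hb (Fin.rev_le_rev.mpr hxy)
  have h2 : (fun k => |b k|) ∘ (Fin.revPerm : Equiv.Perm (Fin p))
      = (fun k => |b k|) ∘ Tuple.sort (fun k => |b k|) :=
    Tuple.comp_sort_eq_comp_iff_monotone.mpr hmono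
  have h3 := congrFun h2.symm i.rev
  simpa [sortedAbs, Fin.revPerm, Fin.rev_rev] using h3

lemma sortedL1_eq_of_antitone (lam : Fin p → ℝ) {b : Fin p → ℝ}
    (hb : Antitone fun k => |b k|) : sortedL1 lam b = ∑ i, lam i * |b i| :=
  Finset.sum_congr rfl fun i _ => by rw [sortedAbs_of_antitone hb]

lemma monovary_of_antitone (f g : Fin p → ℝ) (hf : Antitone f) (hg : Antitone g) :
    Monovary f g := by
  intro i j h
  have hji : j < i := by
    by_contra hc
    push_neg at hc
    exact absurd (hg hc) (not_le.mpr h)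
  exact hf hji.le

lemma rearrange (lam : Fin p → ℝ) (hlam : Antitone lam)
    (b : Fin p → ℝ) (τ : Equiv.Perm (Fin p)) :
    ∑ i, lam i * |b (τ i)| ≤ sortedL1 lam b := by
  have hmv : Monovary lam (sortedAbs b) :=
    monovary_of_antitone _ _ hlam (sortedAbs_antitone b)
  have key := hmv.sum_mul_comp_perm_le_sum_mul (σ := τ.trans (rho b).symm)
  have h1 : ∀ i, sortedAbs b ((τ.trans (rho b).symm) i) = |b (τ i)| := by
    intro i
    rw [sortedAbs_eq_rho]
    simp
  calc ∑ i, lam i * |b (τ i)| = ∑ i, lam i * sortedAbs b ((τ.trans (rho b).symm) i) :=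
        Finset.sum_congr rfl fun i _ => by rw [h1]
    _ ≤ ∑ i, lam i * sortedAbs b i := key
    _ = sortedL1 lam b := rfl

/-- The SLOPE objective. -/
noncomputable def obj (lam ytil b : Fin p → ℝ) : ℝ :=
  (1 / 2) * ∑ i, (ytil i - b i) ^ 2 + sortedL1 lam b

lemma sum_diff_single (f g : Fin p → ℝ) (i : Fin p) (h : ∀ j, j ≠ i → f j = g j) :
    ∑ j, f j = ∑ j, g j + (f i - g i) := by
  have h1 : ∑ j, (f j - g j) = f i - g i := by
    rw [Finset.sum_eq_single_of_mem i (Finset.mem_univ i)]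
    intro j _ hj
    rw [h j hj]; ring
  have h2 : ∑ j, (f j - g j) = ∑ j, f j - ∑ j, g j := Finset.sum_sub_distrib f g
  linarith

lemma sum_diff_pair (f g : Fin p → ℝ) (i j : Fin p) (hij : i ≠ j)
    (h : ∀ k, k ≠ i → k ≠ j → f k = g k) :
    ∑ k, f k = ∑ k, g k + ((f i - g i) + (f j - g j)) := by
  have h0 : ∀ k ∈ Finset.univ, k ∉ ({i, j} : Finset (Fin p)) → f k - g k = 0 := by
    intro k _ hk
    simp only [Finset.mem_insert, Finset.mem_singleton, not_or] at hk
    rw [h k hk.1 hk.2]; ring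
  have h1 : ∑ k ∈ ({i, j} : Finset (Fin p)), (f k - g k) = ∑ k, (f k - g k) :=
    Finset.sum_subset (Finset.subset_univ _) h0
  rw [Finset.sum_insert (by simpa using hij), Finset.sum_singleton] at h1
  have h2 : ∑ k, (f k - g k) = ∑ k, f k - ∑ k, g k := Finset.sum_sub_distrib f g
  linarith

/-- Uniqueness of the minimizer. -/
lemma unique_min (lam ytil : Fin p → ℝ) (hlam : Antitone lam) (hlam0 : ∀ i, 0 ≤ lam i)
    (βhat : Fin p → ℝ) (hmin : ∀ x, obj lam ytil βhat ≤ obj lam ytil x)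
    (b : Fin p → ℝ) (hb : obj lam ytil b ≤ obj lam ytil βhat) : b = βhat := by
  by_contra hne
  set m := fun i => (βhat i + b i) / 2 with hm
  have hJ : sortedL1 lam m ≤ (sortedL1 lam βhat + sortedL1 lam b) / 2 := by
    have h2 : ∀ i, lam i * |m (rho m i)| ≤
        lam i * ((|βhat (rho m i)| + |b (rho m i)|) / 2) := by
      intro i
      apply mul_le_mul_of_nonneg_left _ (hlam0 i)
      have := abs_add_le (βhat (rho m i)) (b (rho m i))
      calc |m (rho m i)| = |βhat (rho m i) + b (rho m i)| / 2 := by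
            rw [hm]; rw [abs_div]; simp
        _ ≤ (|βhat (rho m i)| + |b (rho m i)|) / 2 := by linarith
    calc sortedL1 lam m = ∑ i, lam i * |m (rho m i)| :=
          Finset.sum_congr rfl fun i _ => by rw [sortedAbs_eq_rho]
      _ ≤ ∑ i, lam i * ((|βhat (rho m i)| + |b (rho m i)|) / 2) :=
          Finset.sum_le_sum fun i _ => h2 i
      _ = (∑ i, lam i * |βhat (rho m i)| + ∑ i, lam i * |b (rho m i)|) / 2 := by
          rw [← Finset.sum_add_distrib, Finset.sum_div]
          exact Finset.sum_congr rfl fun i _ => by ring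
      _ ≤ (sortedL1 lam βhat + sortedL1 lam b) / 2 := by
          have hb1 := rearrange lam hlam βhat (rho m)
          have hb2 := rearrange lam hlam b (rho m)
          linarith
  have hQ : ∑ i, (ytil i - m i) ^ 2 =
      (∑ i, (ytil i - βhat i) ^ 2) / 2 + (∑ i, (ytil i - b i) ^ 2) / 2
        - (∑ i, (βhat i - b i) ^ 2) / 4 := by
    rw [Finset.sum_div, Finset.sum_div, Finset.sum_div, ← Finset.sum_add_distrib,
      ← Finset.sum_sub_distrib]
    exact Finset.sum_congr rfl fun i _ => by rw [hm]; ring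
  have hD : 0 < ∑ i, (βhat i - b i) ^ 2 := by
    have hex : ∃ i, βhat i ≠ b i := by
      by_contra hc
      push_neg at hc
      exact hne (funext fun i => (hc i).symm)
    obtain ⟨i, hi⟩ := hex
    apply Finset.sum_pos' (fun j _ => sq_nonneg _)
    exact ⟨i, Finset.mem_univ i, lt_of_le_of_ne (sq_nonneg _)
      (Ne.symm (pow_ne_zero 2 (sub_ne_zero.mpr hi)))⟩
  have hlt : obj lam ytil m < obj lam ytil βhat := by
    have h1 := hmin b
    unfold obj at h1 hb ⊢
    rw [hQ]
    linarith
  exact absurd (hmin m) (not_le.mpr hlt)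


/-- At the optimum, each coordinate is sign-aligned with the data. -/
lemma sign_align (lam ytil βhat : Fin p → ℝ)
    (hmin : ∀ x, obj lam ytil βhat ≤ obj lam ytil x) (i : Fin p) :
    0 ≤ ytil i * βhat i := by
  by_contra h
  push_neg at h
  set b := Function.update βhat i (-βhat i) with hbdef
  have hbi : b i = -βhat i := by rw [hbdef, Function.update_self]
  have hJ : sortedL1 lam b = sortedL1 lam βhat := by
    apply sortedL1_congr (1 : Equiv.Perm (Fin p))
    intro k
    by_cases hk : k = i
    · subst hk; simp [hbdef]
    · simp [hbdef, Function.update_of_ne hk]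
  have hq := sum_diff_single (fun k => (ytil k - b k) ^ 2) (fun k => (ytil k - βhat k) ^ 2) i
    (fun j hj => by beta_reduce; rw [hbdef, Function.update_of_ne hj])
  beta_reduce at hq
  have := hmin b
  unfold obj at this
  rw [hJ, hq, hbi] at this
  nlinarith [this, h]

/-- At the optimum, the absolute values are nonincreasing. -/
lemma abs_antitone (lam ytil βhat : Fin p → ℝ) (hlam : Antitone lam)
    (hlam0 : ∀ i, 0 ≤ lam i) (hy : Antitone fun i => |ytil i|)
    (hmin : ∀ x, obj lam ytil βhat ≤ obj lam ytil x) :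
    Antitone fun i => |βhat i| := by
  intro i j hij
  rcases eq_or_lt_of_le hij with rfl | hlt
  · exact le_refl _
  by_contra hcon
  push_neg at hcon
  set si : ℝ := if 0 ≤ ytil i then 1 else -1 with hsi
  set sj : ℝ := if 0 ≤ ytil j then 1 else -1 with hsj
  have hsi_abs : |si| = 1 := by rw [hsi]; split_ifs <;> simp
  have hsj_abs : |sj| = 1 := by rw [hsj]; split_ifs <;> simp
  have hsi_mul : ytil i * si = |ytil i| := by
    rw [hsi]; split_ifs with h
    · rw [abs_of_nonneg h]; ring
    · push_neg at h; rw [abs_of_neg h]; ring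
  have hsj_mul : ytil j * sj = |ytil j| := by
    rw [hsj]; split_ifs with h
    · rw [abs_of_nonneg h]; ring
    · push_neg at h; rw [abs_of_neg h]; ring
  have hss_i : si ^ 2 = 1 := by rw [hsi]; split_ifs <;> norm_num
  have hss_j : sj ^ 2 = 1 := by rw [hsj]; split_ifs <;> norm_num
  set b := Function.update (Function.update βhat i (si * |βhat j|)) j (sj * |βhat i|)
    with hbdef
  have hbi : b i = si * |βhat j| := by
    rw [hbdef, Function.update_of_ne hlt.ne, Function.update_self]
  have hbj : b j = sj * |βhat i| := by rw [hbdef, Function.update_self]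
  have hbk : ∀ k, k ≠ i → k ≠ j → b k = βhat k := fun k hki hkj => by
    rw [hbdef, Function.update_of_ne hkj, Function.update_of_ne hki]
  have habs : ∀ k, |b k| = |βhat (Equiv.swap i j k)| := by
    intro k
    by_cases hki : k = i
    · subst hki; rw [hbi, Equiv.swap_apply_left, abs_mul, hsi_abs, one_mul, abs_abs]
    by_cases hkj : k = j
    · subst hkj; rw [hbj, Equiv.swap_apply_right, abs_mul, hsj_abs, one_mul, abs_abs]
    · rw [hbk k hki hkj, Equiv.swap_apply_of_ne_of_ne hki hkj]
  have hJ : sortedL1 lam b = sortedL1 lam βhat := sortedL1_congr _ habs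
  have hsign_i : ytil i * βhat i = |ytil i| * |βhat i| := by
    calc ytil i * βhat i = |ytil i * βhat i| :=
          (abs_of_nonneg (sign_align lam ytil βhat hmin i)).symm
      _ = |ytil i| * |βhat i| := abs_mul _ _
  have hsign_j : ytil j * βhat j = |ytil j| * |βhat j| := by
    calc ytil j * βhat j = |ytil j * βhat j| :=
          (abs_of_nonneg (sign_align lam ytil βhat hmin j)).symm
      _ = |ytil j| * |βhat j| := abs_mul _ _
  have hq := sum_diff_pair (fun k => (ytil k - b k) ^ 2) (fun k => (ytil k - βhat k) ^ 2)
    i j hlt.ne (fun k hki hkj => by beta_reduce; rw [hbk k hki hkj])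
  beta_reduce at hq
  have hmono_y : |ytil j| ≤ |ytil i| := hy hij
  have key : ((ytil i - b i) ^ 2 - (ytil i - βhat i) ^ 2)
      + ((ytil j - b j) ^ 2 - (ytil j - βhat j) ^ 2) ≤ 0 := by
    have e1 : (ytil i - b i) ^ 2 = ytil i ^ 2 - 2 * |ytil i| * |βhat j| + |βhat j| ^ 2 := by
      rw [hbi]
      have h0 : (ytil i - si * |βhat j|) ^ 2
          = ytil i ^ 2 - 2 * (ytil i * si) * |βhat j| + si ^ 2 * |βhat j| ^ 2 := by ring
      rw [h0, hsi_mul, hss_i]; ring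
    have e2 : (ytil j - b j) ^ 2 = ytil j ^ 2 - 2 * |ytil j| * |βhat i| + |βhat i| ^ 2 := by
      rw [hbj]
      have h0 : (ytil j - sj * |βhat i|) ^ 2
          = ytil j ^ 2 - 2 * (ytil j * sj) * |βhat i| + sj ^ 2 * |βhat i| ^ 2 := by ring
      rw [h0, hsj_mul, hss_j]; ring
    have e3 : (ytil i - βhat i) ^ 2 = ytil i ^ 2 - 2 * (|ytil i| * |βhat i|) + |βhat i| ^ 2 := by
      have h0 : (ytil i - βhat i) ^ 2 = ytil i ^ 2 - 2 * (ytil i * βhat i) + βhat i ^ 2 := by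
        ring
      rw [h0, hsign_i, ← sq_abs (βhat i)]
    have e4 : (ytil j - βhat j) ^ 2 = ytil j ^ 2 - 2 * (|ytil j| * |βhat j|) + |βhat j| ^ 2 := by
      have h0 : (ytil j - βhat j) ^ 2 = ytil j ^ 2 - 2 * (ytil j * βhat j) + βhat j ^ 2 := by
        ring
      rw [h0, hsign_j, ← sq_abs (βhat j)]
    rw [e1, e2, e3, e4]
    have hx : 0 ≤ (|ytil i| - |ytil j|) * (|βhat j| - |βhat i|) :=
      mul_nonneg (by linarith) (by linarith)
    nlinarith [hx]
  have hle : obj lam ytil b ≤ obj lam ytil βhat := by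
    unfold obj
    rw [hJ, hq]
    linarith [key]
  have heq := unique_min lam ytil hlam hlam0 βhat hmin b hle
  have hbi' : b i = βhat i := by rw [heq]
  rw [hbi] at hbi'
  have habs' : |βhat j| = |βhat i| := by
    have := congrArg abs hbi'
    rwa [abs_mul, hsi_abs, one_mul, abs_abs] at this
  linarith

/-- The support of a vector with nonincreasing absolute values is a prefix. -/
lemma support_iff (βhat : Fin p → ℝ) (habs : Antitone fun i => |βhat i|)
    (istar : ℕ) (histar : istar = Set.ncard {i : Fin p | βhat i ≠ 0}) :
    ∀ i : Fin p, βhat i ≠ 0 ↔ (i : ℕ) < istar := by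
  classical
  set S : Finset (Fin p) := Finset.univ.filter (fun i => βhat i ≠ 0) with hS
  have hcard : istar = S.card := by
    rw [histar, Set.ncard_eq_toFinset_card']
    congr 1
    ext i
    simp [hS]
  have hdc : ∀ i j : Fin p, i ≤ j → j ∈ S → i ∈ S := by
    intro i j hij hj
    simp only [hS, Finset.mem_filter, Finset.mem_univ, true_and] at hj ⊢
    intro h0
    apply hj
    have h1 : |βhat j| ≤ |βhat i| := habs hij
    rw [h0, abs_zero] at h1
    exact abs_eq_zero.mp (le_antisymm h1 (abs_nonneg _))
  intro i
  constructor
  · intro hi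
    have hsub : Finset.Iic i ⊆ S := fun k hk =>
      hdc k i (Finset.mem_Iic.mp hk) (by simp [hS, hi])
    have hle := Finset.card_le_card hsub
    rw [Fin.card_Iic] at hle
    omega
  · intro hi
    by_contra h0
    have hnotin : i ∉ S := by simp [hS, h0]
    have hsub : S ⊆ Finset.Iio i := by
      intro k hk
      rw [Finset.mem_Iio]
      by_contra hki
      push_neg at hki
      exact hnotin (hdc i k hki hk)
    have hle := Finset.card_le_card hsub
    rw [Fin.card_Iio] at hle
    omega

end SlopeAux


open SlopeAux

/-- bracketing of the number of SLOPE rejections between the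
step-down and step-up indices (orthogonal design, sorted data). -/
theorem slope_bracketing {p : ℕ} (lam ytil : Fin p → ℝ)
    (hlam_mono : Antitone lam) (hlam_pos : ∀ i, 0 < lam i)
    (hy_sorted : Antitone fun i => |ytil i|)
    (βhat : Fin p → ℝ)
    (hmin : ∀ b : Fin p → ℝ,
      (1 / 2) * ∑ i, (ytil i - βhat i) ^ 2 + sortedL1 lam βhat ≤
      (1 / 2) * ∑ i, (ytil i - b i) ^ 2 + sortedL1 lam b)
    (istar : ℕ) (histar : istar = Set.ncard {i : Fin p | βhat i ≠ 0})
    (iSU : ℕ)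
    -- iSU is the largest (1-based) index i with |ỹ|₍ᵢ₎ > λᵢ, and 0 if there is none
    (hSU1 : ∀ i : Fin p, lam i < |ytil i| → (i : ℕ) + 1 ≤ iSU)
    (hSU2 : iSU = 0 ∨ ∃ i : Fin p, (i : ℕ) + 1 = iSU ∧ lam i < |ytil i|)
    (iSD : ℕ)
    -- iSD + 1 is the smallest (1-based) index i with |ỹ|₍ᵢ₎ ≤ λᵢ, and iSD = p if there is none
    (hSD1 : ∀ i : Fin p, (i : ℕ) < iSD → lam i < |ytil i|)
    (hSD2 : iSD = p ∨ ∃ i : Fin p, (i : ℕ) = iSD ∧ |ytil i| ≤ lam i) :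
    iSD ≤ istar ∧ istar ≤ iSU ∧
    (∀ i : Fin p, (i : ℕ) < istar → βhat i ≠ 0) ∧
    (∀ i : Fin p, istar ≤ (i : ℕ) → βhat i = 0) := by
  classical
  have hlam0 : ∀ i, 0 ≤ lam i := fun i => (hlam_pos i).le
  have hmin' : ∀ x, obj lam ytil βhat ≤ obj lam ytil x := hmin
  have habs : Antitone fun i => |βhat i| :=
    abs_antitone lam ytil βhat hlam_mono hlam0 hy_sorted hmin'
  have hsupp := support_iff βhat habs istar histar
  have histar_le_p : istar ≤ p := by
    rw [histar]
    have h1 := Set.ncard_le_ncard (Set.subset_univ {i : Fin p | βhat i ≠ 0})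
      Set.finite_univ
    simpa [Set.ncard_univ] using h1
  have hzero : ∀ k : Fin p, istar ≤ (k : ℕ) → βhat k = 0 := by
    intro k hk
    by_contra h
    exact absurd ((hsupp k).mp h) (by omega)
  refine ⟨?_, ?_, fun i hi => (hsupp i).mpr hi, hzero⟩
  · -- iSD ≤ istar
    by_contra hc
    push_neg at hc
    have hiSD_le : iSD ≤ p := by
      rcases hSD2 with h | ⟨i, hi, _⟩
      · omega
      · have := i.isLt; omega
    have histar_lt_p : istar < p := lt_of_lt_of_le hc hiSD_le
    set i₀ : Fin p := ⟨istar, histar_lt_p⟩ with hi₀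
    have hy0 : lam i₀ < |ytil i₀| := hSD1 i₀ hc
    have hβ0 : βhat i₀ = 0 := hzero i₀ (by simp [hi₀])
    set t : ℝ := |ytil i₀| - lam i₀ with ht
    have ht0 : 0 < t := by rw [ht]; linarith
    have key : ∀ ε : ℝ, 0 < ε → ε ≤ t →
        (∀ k : Fin p, (k : ℕ) < istar → ε ≤ |βhat k|) → False := by
      intro ε hε hεt hεk
      set s : ℝ := if 0 ≤ ytil i₀ then 1 else -1 with hs
      have hs_abs : |s| = 1 := by rw [hs]; split_ifs <;> simp
      have hs_mul : ytil i₀ * s = |ytil i₀| := by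
        rw [hs]; split_ifs with h
        · rw [abs_of_nonneg h]; ring
        · push_neg at h; rw [abs_of_neg h]; ring
      have hss : s ^ 2 = 1 := by rw [hs]; split_ifs <;> norm_num
      set b := Function.update βhat i₀ (s * ε) with hbdef
      have hbi : b i₀ = s * ε := by rw [hbdef, Function.update_self]
      have hbk : ∀ k, k ≠ i₀ → b k = βhat k := fun k hk => by
        rw [hbdef, Function.update_of_ne hk]
      have hbabs_i : |b i₀| = ε := by
        rw [hbi, abs_mul, hs_abs, one_mul, abs_of_pos hε]
      have hanti : Antitone fun k => |b k| := by
        intro k l hkl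
        by_cases hki : k = i₀
        · subst hki
          by_cases hli : l = i₀
          · subst hli; exact le_refl _
          · have hkl' : (i₀ : ℕ) < (l : ℕ) :=
              lt_of_le_of_ne (by exact_mod_cast hkl) (fun h => hli (Fin.ext h.symm))
            have hl0 : βhat l = 0 := hzero l (by simp [hi₀] at hkl'; omega)
            simp only [hbk l hli, hl0, abs_zero, hbabs_i]
            exact hε.le
        · by_cases hli : l = i₀
          · subst hli
            have hk' : (k : ℕ) < istar := by
              have : (k : ℕ) < (i₀ : ℕ) :=
                lt_of_le_of_ne (by exact_mod_cast hkl) (fun h => hki (Fin.ext h))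
              simpa [hi₀] using this
            simp only [hbk k hki, hbabs_i]
            exact hεk k hk'
          · simp only [hbk k hki, hbk l hli]
            exact habs hkl
      have hJb : sortedL1 lam b = ∑ k, lam k * |b k| := sortedL1_eq_of_antitone lam hanti
      have hJβ : sortedL1 lam βhat = ∑ k, lam k * |βhat k| :=
        sortedL1_eq_of_antitone lam habs
      have hq := sum_diff_single (fun k => (ytil k - b k) ^ 2)
        (fun k => (ytil k - βhat k) ^ 2) i₀ (fun j hj => by beta_reduce; rw [hbk j hj])
      beta_reduce at hq
      have hr := sum_diff_single (fun k => lam k * |b k|) (fun k => lam k * |βhat k|) i₀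
        (fun j hj => by beta_reduce; rw [hbk j hj])
      beta_reduce at hr
      have hlt : obj lam ytil b < obj lam ytil βhat := by
        unfold obj
        rw [hJb, hJβ, hq, hr]
        have e1 : (ytil i₀ - b i₀) ^ 2 = ytil i₀ ^ 2 - 2 * |ytil i₀| * ε + ε ^ 2 := by
          rw [hbi]
          have h0 : (ytil i₀ - s * ε) ^ 2
              = ytil i₀ ^ 2 - 2 * (ytil i₀ * s) * ε + s ^ 2 * ε ^ 2 := by ring
          rw [h0, hs_mul, hss]; ring
        have e2 : (ytil i₀ - βhat i₀) ^ 2 = ytil i₀ ^ 2 := by rw [hβ0]; ring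
        have e3 : lam i₀ * |b i₀| = lam i₀ * ε := by rw [hbabs_i]
        have e4 : lam i₀ * |βhat i₀| = 0 := by rw [hβ0, abs_zero, mul_zero]
        rw [e1, e2, e3, e4]
        have hmul : ε * ε ≤ ε * t := mul_le_mul_of_nonneg_left hεt hε.le
        rw [ht] at hmul
        nlinarith [hmul, hε, hy0]
      exact absurd (hmin' b) (not_le.mpr hlt)
    rcases Nat.eq_zero_or_pos istar with h0 | hpos
    · exact key t ht0 le_rfl (fun k hk => by omega)
    · have hlast : istar - 1 < p := by omega
      set jl : Fin p := ⟨istar - 1, hlast⟩ with hjl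
      have hjlne : βhat jl ≠ 0 := (hsupp jl).mpr (by simp [hjl]; omega)
      have hm : 0 < |βhat jl| := abs_pos.mpr hjlne
      refine key (min t |βhat jl|) (lt_min ht0 hm) (min_le_left _ _) ?_
      intro k hk
      have hkjl : k ≤ jl := by
        rw [Fin.le_def]
        simp [hjl]
        omega
      exact le_trans (min_le_right _ _) (habs hkjl)
  · -- istar ≤ iSU
    by_contra hc
    push_neg at hc
    have h1p : istar - 1 < p := by omega
    set j₀ : Fin p := ⟨istar - 1, h1p⟩ with hj₀
    have hj₀ne : βhat j₀ ≠ 0 := (hsupp j₀).mpr (by simp [hj₀]; omega)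
    obtain ⟨b, hbdef⟩ : ∃ b : Fin p → ℝ, b = fun k : Fin p => if (k : ℕ) < iSU then βhat k else 0 :=
      ⟨_, rfl⟩
    have hb1 : ∀ k : Fin p, (k : ℕ) < iSU → b k = βhat k := fun k hk => by
      rw [hbdef]; exact if_pos hk
    have hb2 : ∀ k : Fin p, iSU ≤ (k : ℕ) → b k = 0 := fun k hk => by
      rw [hbdef]; exact if_neg (by omega)
    have hanti : Antitone fun k => |b k| := by
      intro k l hkl
      beta_reduce
      by_cases hl : (l : ℕ) < iSU
      · have hk : (k : ℕ) < iSU := lt_of_le_of_lt (by exact_mod_cast hkl) hl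
        rw [hb1 k hk, hb1 l hl]
        exact habs hkl
      · rw [hb2 l (by omega)]
        simp [abs_nonneg]
    have hJb : sortedL1 lam b = ∑ k, lam k * |b k| := sortedL1_eq_of_antitone lam hanti
    have hJβ : sortedL1 lam βhat = ∑ k, lam k * |βhat k| :=
      sortedL1_eq_of_antitone lam habs
    have hylam : ∀ k : Fin p, iSU ≤ (k : ℕ) → |ytil k| ≤ lam k := by
      intro k hk
      by_contra h
      push_neg at h
      have := hSU1 k h
      omega
    obtain ⟨c, hcdef⟩ : ∃ c : Fin p → ℝ, c = fun k => ((1 : ℝ) / 2) * (ytil k - b k) ^ 2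
        + lam k * |b k| - (((1 : ℝ) / 2) * (ytil k - βhat k) ^ 2 + lam k * |βhat k|) :=
      ⟨_, rfl⟩
    have hsum : obj lam ytil b - obj lam ytil βhat = ∑ k, c k := by
      unfold obj
      rw [hJb, hJβ, Finset.mul_sum, Finset.mul_sum, ← Finset.sum_add_distrib,
        ← Finset.sum_add_distrib, ← Finset.sum_sub_distrib]
      exact Finset.sum_congr rfl fun k _ => by rw [hcdef]
    have hc_bound : ∀ k : Fin p, iSU ≤ (k : ℕ) → c k ≤ -(βhat k ^ 2) / 2 := by
      intro k hk
      have hck : c k = ytil k * βhat k - βhat k ^ 2 / 2 - lam k * |βhat k| := by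
        rw [hcdef]
        beta_reduce
        rw [hb2 k hk, abs_zero]
        ring
      have h1 : ytil k * βhat k ≤ |ytil k| * |βhat k| := by
        calc ytil k * βhat k ≤ |ytil k * βhat k| := le_abs_self _
          _ = |ytil k| * |βhat k| := abs_mul _ _
      have h2 : |ytil k| * |βhat k| ≤ lam k * |βhat k| :=
        mul_le_mul_of_nonneg_right (hylam k hk) (abs_nonneg _)
      rw [hck]
      linarith
    have hc_le : ∀ k : Fin p, c k ≤ 0 := by
      intro k
      by_cases hk : (k : ℕ) < iSU
      · have : c k = 0 := by
          rw [hcdef]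
          beta_reduce
          rw [hb1 k hk]
          ring
        linarith
      · have := hc_bound k (by omega)
        nlinarith [sq_nonneg (βhat k)]
    have hc_strict : c j₀ < 0 := by
      have hge : iSU ≤ (j₀ : ℕ) := by simp [hj₀]; omega
      have h1 := hc_bound j₀ hge
      have h2 : 0 < βhat j₀ ^ 2 :=
        lt_of_le_of_ne (sq_nonneg _) (Ne.symm (pow_ne_zero 2 hj₀ne))
      linarith
    have hneg : ∑ k, c k < 0 := by
      have h0 := Finset.sum_lt_sum (f := c) (g := fun _ => (0 : ℝ))
        (fun k _ => hc_le k) ⟨j₀, Finset.mem_univ j₀, hc_strict⟩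
      simpa using h0
    have hlt : obj lam ytil b < obj lam ytil βhat := by linarith [hsum]
    exact absurd (hmin' b) (not_le.mpr hlt)
end
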